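/- Orthogonality at the top: with C(n; z₁, z₂, 0) = (−1)^{z₁} q^{n(1−n)/2 − z₁(p+1) + n p₂} ( [n]! [2p₁−z₁; n−z₁]! [2p₂−z₂; n−z₂]! / ([2p+n+1; n]! [z₁]! [z₂]!) )^{1/2} where p = p₁+p₂−n and z₂ = n−z₁, one has ∑_{z₁=0}^{n} C(n; z₁, n−z₁, 0)² = 1, as a consequence of the q-binomial identity ∑_k [α+n−k choose n−k]_q [β+k choose k]_q q^{−k(α+β+2)} = [α+β+n+1 choose n]_q q^{−n(1+β)} with α = 2p₁−n, β = 2p₂−n. -/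

import Mathlib

open Finset

/-- `q^x` for complex exponent, via `exp (x log q)`. -/
noncomputable def Qp (q x : ℂ) : ℂ := Complex.exp (x * Complex.log q)

/-- q-integer `[x]_q = (q^x - q^{-x})/(q - q⁻¹)`. -/
noncomputable def qint (q x : ℂ) : ℂ := (Qp q x - Qp q (-x)) / (q - q⁻¹)

/-- q-factorial `[n]_q! = ∏_{k=1}^n [k]_q`. -/
noncomputable def qfact (q : ℂ) (n : ℕ) : ℂ := ∏ k ∈ Finset.Icc 1 n, qint q (k : ℂ)

/-- q-binomial coefficient for natural arguments, `[m]!/([m-k]![k]!)`. -/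
noncomputable def qchoose (q : ℂ) (m k : ℕ) : ℂ := qfact q m / (qfact q (m - k) * qfact q k)

/-- falling q-factorial `[α; k]! = ∏_{j=0}^{k-1} [α-j]_q`. -/
noncomputable def qfall (q α : ℂ) (k : ℕ) : ℂ := ∏ j ∈ Finset.range k, qint q (α - (j : ℂ))

/-- generalized q-binomial `[α choose k]_q = [α;k]!/[k]!`. -/
noncomputable def qbinom (q α : ℂ) (k : ℕ) : ℂ := qfall q α k / qfact q k

lemma Qp_add (q x y : ℂ) : Qp q (x + y) = Qp q x * Qp q y := by
  simp [Qp, add_mul, Complex.exp_add]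
lemma Qp_sub (q x y : ℂ) : Qp q (x - y) = Qp q x * (Qp q y)⁻¹ := by
  simp [Qp, sub_mul, Complex.exp_sub, div_eq_mul_inv]
lemma Qp_zero (q : ℂ) : Qp q 0 = 1 := by simp [Qp]
lemma Qp_neg (q x : ℂ) : Qp q (-x) = (Qp q x)⁻¹ := by
  simp [Qp, ← Complex.exp_neg]
lemma Qp_ne_zero (q x : ℂ) : Qp q x ≠ 0 := Complex.exp_ne_zero _
lemma Qp_one (q : ℂ) (hq : q ≠ 0) : Qp q 1 = q := by
  simp [Qp, Complex.exp_log hq]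
lemma qint_zero (q : ℂ) : qint q 0 = 0 := by simp [qint]
lemma qfact_zero (q : ℂ) : qfact q 0 = 1 := by simp [qfact]
lemma qfact_succ (q : ℂ) (n : ℕ) : qfact q (n+1) = qfact q n * qint q ((n:ℂ)+1) := by
  rw [qfact, qfact, Finset.prod_Icc_succ_top (Nat.le_add_left 1 n)]
  push_cast; ring
lemma qfall_zero (q x : ℂ) : qfall q x 0 = 1 := by simp [qfall]
lemma qfall_succ_top (q x : ℂ) (k : ℕ) : qfall q x (k+1) = qint q x * qfall q (x-1) k := by
  rw [qfall, qfall, Finset.prod_range_succ', mul_comm]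
  congr 1
  · congr 1; push_cast; ring
  · apply Finset.prod_congr rfl; intro i _; congr 1; push_cast; ring
lemma qfall_succ_top' (q y : ℂ) (k : ℕ) : qfall q (y+1) (k+1) = qint q (y+1) * qfall q y k := by
  rw [qfall_succ_top]; congr 2; ring
lemma qfact_ne_zero (q : ℂ) (hgen : ∀ k : ℕ, 1 ≤ k → qint q (k : ℂ) ≠ 0) (n : ℕ) :
    qfact q n ≠ 0 := by
  induction n with
  | zero => simp [qfact_zero]
  | succ m ih =>
      rw [qfact_succ]
      exact mul_ne_zero ih (by have := hgen (m+1) (by omega); push_cast at this ⊢; exact this)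

noncomputable def fTerm (q α β : ℂ) (n k : ℕ) : ℂ :=
  Qp q ((n:ℂ)*(1+β) - (k:ℂ)*(α+β+2)) * qfact q n * qfall q (α + (n:ℂ) - (k:ℂ)) (n-k) *
    qfall q (β + (k:ℂ)) k / (qfact q k * qfact q (n-k))

noncomputable def Gterm (q α β : ℂ) (n k : ℕ) : ℂ :=
  -(Qp q ((n:ℂ)*(1+β) - (k:ℂ)*(α+β+2) + β + (k:ℂ) - (n:ℂ)) * qfact q n * qint q (k:ℂ) *
     qfall q (α + (n:ℂ) + 1 - (k:ℂ)) (n+1-k) * qfall q (β + (k:ℂ)) k /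
     (qfact q k * qfact q (n+1-k)))
set_option maxHeartbeats 1000000 in
lemma stepCore (q d A B K J E P R Fk Fj Fn : ℂ) (hq : q ≠ 0) (hA : A ≠ 0) (hB : B ≠ 0)
    (hK : K ≠ 0) (hJ : J ≠ 0) (hd : d ≠ 0) (hFk : Fk ≠ 0) (hFj : Fj ≠ 0)
    (hv3 : J * q * (J * q) - 1 ≠ 0) (hv7 : K * q * (K * q) - 1 ≠ 0) :
    E * (q * B) * (Fn * ((K*J*q*(K*J*q) - 1)/(d*(K*J*q)))) *
        (((A*J*q*(A*J*q) - 1)/(d*(A*J*q))) * P) * R /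
      (Fk * (Fj * ((J*q*(J*q) - 1)/(d*(J*q)))))
    = ((A*B*K*J*(q*q)*(A*B*K*J*(q*q)) - 1)/(d*(A*B*K*J*(q*q)))) *
        (E * Fn * P * R / (Fk * Fj))
      + ( -(E * (A*J*q)⁻¹ * Fn * (((K*q*(K*q) - 1))/(d*(K*q))) * P *
             ((((B*K*q*(B*K*q) - 1))/(d*(B*K*q))) * R) /
             ((Fk * (((K*q*(K*q) - 1))/(d*(K*q)))) * Fj))
         - -(E * (B * J⁻¹) * Fn * (((K*K - 1))/(d*K)) *
             (((A*J*q*(A*J*q) - 1)/(d*(A*J*q))) * P) * R /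
             (Fk * (Fj * ((J*q*(J*q) - 1)/(d*(J*q))))))) := by
  have hJq : J * q ≠ 0 := mul_ne_zero hJ hq
  have hKq : K * q ≠ 0 := mul_ne_zero hK hq
  have hden : Fk * (Fj * ((J*q*(J*q) - 1)/(d*(J*q)))) ≠ 0 :=
    mul_ne_zero hFk (mul_ne_zero hFj (div_ne_zero hv3 (mul_ne_zero hd hJq)))
  have hden2 : (Fk * (((K*q*(K*q) - 1))/(d*(K*q)))) * Fj ≠ 0 :=
    mul_ne_zero (mul_ne_zero hFk (div_ne_zero hv7 (mul_ne_zero hd hKq))) hFj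
  have e1 : E * (q * B) * (Fn * ((K*J*q*(K*J*q) - 1)/(d*(K*J*q)))) *
        (((A*J*q*(A*J*q) - 1)/(d*(A*J*q))) * P) * R /
      (Fk * (Fj * ((J*q*(J*q) - 1)/(d*(J*q))))) *
      (d * Fk * Fj * (J*q*(J*q) - 1) * (A*B*(K*K)*(J*J*J)*(q*q*q)))
      = (E * Fn * P * R) *
        (K * B * B * J * J * (q*q*q) * (K*J*q*(K*J*q) - 1) * (A*J*q*(A*J*q) - 1)) := by
    rw [div_mul_eq_mul_div, div_eq_iff hden]
    simp only [← div_eq_mul_inv, mul_div_assoc', div_mul_eq_mul_div, div_div_eq_mul_div, div_div]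
    rw [div_eq_div_iff]
    rotate_left
    · exact mul_ne_zero (mul_ne_zero hd (mul_ne_zero (mul_ne_zero hK hJ) hq))
        (mul_ne_zero hd (mul_ne_zero (mul_ne_zero hA hJ) hq))
    · exact mul_ne_zero hd hJq
    ring
  have e2 : ((A*B*K*J*(q*q)*(A*B*K*J*(q*q)) - 1)/(d*(A*B*K*J*(q*q)))) *
        (E * Fn * P * R / (Fk * Fj)) *
      (d * Fk * Fj * (J*q*(J*q) - 1) * (A*B*(K*K)*(J*J*J)*(q*q*q)))
      = (E * Fn * P * R) *
        (K * (A*B*K*J*(q*q)*(A*B*K*J*(q*q)) - 1) * (J*q*(J*q) - 1) * J * J * q) := by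
    simp only [← div_eq_mul_inv, mul_div_assoc', div_mul_eq_mul_div, div_div_eq_mul_div, div_div]
    rw [div_eq_iff (show d * (A*B*K*J*(q*q)) * (Fk * Fj) ≠ 0 from
      mul_ne_zero (mul_ne_zero hd (mul_ne_zero (mul_ne_zero (mul_ne_zero
        (mul_ne_zero hA hB) hK) hJ) (mul_ne_zero hq hq))) (mul_ne_zero hFk hFj))]
    ring
  have e3 : E * (A*J*q)⁻¹ * Fn * (((K*q*(K*q) - 1))/(d*(K*q))) * P *
             ((((B*K*q*(B*K*q) - 1))/(d*(B*K*q))) * R) /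
             ((Fk * (((K*q*(K*q) - 1))/(d*(K*q)))) * Fj) *
      (d * Fk * Fj * (J*q*(J*q) - 1) * (A*B*(K*K)*(J*J*J)*(q*q*q)))
      = (E * Fn * P * R) *
        ((B*K*q*(B*K*q) - 1) * (J*q*(J*q) - 1) * K * J * J * q) := by
    rw [div_mul_eq_mul_div, div_eq_iff hden2]
    simp only [← div_eq_mul_inv, mul_div_assoc', div_mul_eq_mul_div, div_div_eq_mul_div, div_div]
    rw [div_eq_div_iff]
    rotate_left
    · exact mul_ne_zero (mul_ne_zero (mul_ne_zero (mul_ne_zero hA hJ) hq)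
        (mul_ne_zero hd hKq)) (mul_ne_zero hd (mul_ne_zero (mul_ne_zero hB hK) hq))
    · exact mul_ne_zero hd hKq
    
    ring
  have e4 : E * (B * J⁻¹) * Fn * (((K*K - 1))/(d*K)) *
             (((A*J*q*(A*J*q) - 1)/(d*(A*J*q))) * P) * R /
             (Fk * (Fj * ((J*q*(J*q) - 1)/(d*(J*q))))) *
      (d * Fk * Fj * (J*q*(J*q) - 1) * (A*B*(K*K)*(J*J*J)*(q*q*q)))
      = (E * Fn * P * R) *
        (K * B * B * J * J * (q*q*q) * (K*K - 1) * (A*J*q*(A*J*q) - 1)) := by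
    rw [div_mul_eq_mul_div, div_eq_iff hden]
    simp only [← div_eq_mul_inv, mul_div_assoc', div_mul_eq_mul_div, div_div_eq_mul_div, div_div]
    rw [div_eq_div_iff]
    rotate_left
    · exact mul_ne_zero (mul_ne_zero hJ (mul_ne_zero hd hK))
        (mul_ne_zero hd (mul_ne_zero (mul_ne_zero hA hJ) hq))
    · exact mul_ne_zero hd hJq
    
    ring
  have hDsne : (d * Fk * Fj * (J*q*(J*q) - 1) * (A*B*(K*K)*(J*J*J)*(q*q*q))) ≠ 0 := by
    refine mul_ne_zero (mul_ne_zero (mul_ne_zero (mul_ne_zero hd hFk) hFj) hv3) ?_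
    exact mul_ne_zero (mul_ne_zero (mul_ne_zero (mul_ne_zero hA hB) (mul_ne_zero hK hK))
      (mul_ne_zero (mul_ne_zero hJ hJ) hJ)) (mul_ne_zero (mul_ne_zero hq hq) hq)
  apply mul_right_cancel₀ hDsne
  linear_combination e1 - e2 + e3 - e4
lemma brk (q X : ℂ) (hqq : q - q⁻¹ ≠ 0) (hX : X ≠ 0) :
    (X - X⁻¹)/(q - q⁻¹) = (X * X - 1)/((q - q⁻¹) * X) := by
  field_simp

lemma step (q α β : ℂ) (hq : q ≠ 0) (hqq : q - q⁻¹ ≠ 0)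
    (hgen : ∀ m : ℕ, 1 ≤ m → qint q (m:ℂ) ≠ 0) (n k : ℕ) (hk : k ≤ n) :
    fTerm q α β (n+1) k
      = qint q (α+β+(n:ℂ)+2) * fTerm q α β n k + (Gterm q α β n (k+1) - Gterm q α β n k) := by
  obtain ⟨j, rfl⟩ : ∃ j, n = k + j := ⟨n - k, by omega⟩
  have hA : Qp q α ≠ 0 := Qp_ne_zero q α
  have hB : Qp q β ≠ 0 := Qp_ne_zero q β
  have hK : Qp q (k:ℂ) ≠ 0 := Qp_ne_zero q _
  have hJ : Qp q (j:ℂ) ≠ 0 := Qp_ne_zero q _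
  have hFk : qfact q k ≠ 0 := qfact_ne_zero q hgen k
  have hFj : qfact q j ≠ 0 := qfact_ne_zero q hgen j
  have hn1 : qint q (((k+j:ℕ):ℂ)+1) = ((Qp q (k:ℂ) * Qp q (j:ℂ) * q * (Qp q (k:ℂ) * Qp q (j:ℂ) * q) - 1))/((q - q⁻¹) * (Qp q (k:ℂ) * Qp q (j:ℂ) * q)) := by
    rw [qint, Qp_neg, show (((k+j:ℕ):ℂ)+1) = ((k:ℂ)+(j:ℂ))+1 from by push_cast; ring,
      Qp_add, Qp_add, Qp_one q hq]
    exact brk q _ hqq (by exact mul_ne_zero (mul_ne_zero hK hJ) hq)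
  have ha1 : qint q (α + (j:ℂ) + 1) = ((Qp q α * Qp q (j:ℂ) * q * (Qp q α * Qp q (j:ℂ) * q) - 1))/((q - q⁻¹) * (Qp q α * Qp q (j:ℂ) * q)) := by
    rw [qint, Qp_neg, Qp_add, Qp_add, Qp_one q hq]
    exact brk q _ hqq (by exact mul_ne_zero (mul_ne_zero hA hJ) hq)
  have hj1 : qint q ((j:ℂ) + 1) = ((Qp q (j:ℂ) * q * (Qp q (j:ℂ) * q) - 1))/((q - q⁻¹) * (Qp q (j:ℂ) * q)) := by
    rw [qint, Qp_neg, Qp_add, Qp_one q hq]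
    exact brk q _ hqq (mul_ne_zero hJ hq)
  have hk1 : qint q ((k:ℂ) + 1) = ((Qp q (k:ℂ) * q) * ((Qp q (k:ℂ) * q)) - 1)/((q - q⁻¹) * (Qp q (k:ℂ) * q)) := by
    rw [qint, Qp_neg, Qp_add, Qp_one q hq]
    exact brk q _ hqq (mul_ne_zero hK hq)
  have hb1 : qint q (β + (k:ℂ) + 1) = ((Qp q β * Qp q (k:ℂ) * q * (Qp q β * Qp q (k:ℂ) * q) - 1))/((q - q⁻¹) * (Qp q β * Qp q (k:ℂ) * q)) := by
    rw [qint, Qp_neg, Qp_add, Qp_add, Qp_one q hq]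
    exact brk q _ hqq (by exact mul_ne_zero (mul_ne_zero hB hK) hq)
  have hk0 : qint q ((k:ℕ):ℂ) = ((Qp q (k:ℂ) * Qp q (k:ℂ) - 1))/((q - q⁻¹) * Qp q (k:ℂ)) := by
    rw [qint, Qp_neg]
    exact brk q _ hqq hK
  have hab : qint q (α+β+((k:ℂ)+(j:ℂ))+2) = ((Qp q α * Qp q β * Qp q (k:ℂ) * Qp q (j:ℂ) * (q * q) * (Qp q α * Qp q β * Qp q (k:ℂ) * Qp q (j:ℂ) * (q * q)) - 1))/((q - q⁻¹) * (Qp q α * Qp q β * Qp q (k:ℂ) * Qp q (j:ℂ) * (q * q))) := by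
    rw [qint, Qp_neg, show (α+β+((k:ℂ)+(j:ℂ))+2) = (((α+β)+(k:ℂ))+(j:ℂ))+(1+1) from by
      push_cast; ring]
    simp only [Qp_add, Qp_one q hq]
    exact brk q _ hqq (by
      exact mul_ne_zero (mul_ne_zero (mul_ne_zero (mul_ne_zero hA hB) hK) hJ)
        (mul_ne_zero hq hq))
  have hv3 : ((Qp q (j:ℂ) * q * (Qp q (j:ℂ) * q) - 1)) ≠ 0 := by
    have h := hgen (j+1) (by omega)
    rw [show (((j+1:ℕ)):ℂ) = (j:ℂ)+1 from by push_cast; ring, hj1] at h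
    exact fun h0 => h (by rw [h0, zero_div])
  have hv7 : ((Qp q (k:ℂ) * q) * ((Qp q (k:ℂ) * q)) - 1) ≠ 0 := by
    have h := hgen (k+1) (by omega)
    rw [show (((k+1:ℕ)):ℂ) = (k:ℂ)+1 from by push_cast; ring, hk1] at h
    exact fun h0 => h (by rw [h0, zero_div])
  simp only [fTerm, Gterm]
  rw [show k+j+1-k = j+1 from by omega, show k+j-k = j from by omega,
    show k+j+1-(k+1) = j from by omega,
    show ((k+j+1:ℕ):ℂ) = (k:ℂ)+(j:ℂ)+1 from by push_cast; ring,
    show ((k+j:ℕ):ℂ) = (k:ℂ)+(j:ℂ) from by push_cast; ring,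
    show ((k+1:ℕ):ℂ) = (k:ℂ)+1 from by push_cast; ring]
  rw [show ((k:ℂ)+(j:ℂ)+1)*(1+β) - (k:ℂ)*(α+β+2)
      = (((k:ℂ)+(j:ℂ))*(1+β) - (k:ℂ)*(α+β+2)) + (1+β) from by ring,
    show ((k:ℂ)+(j:ℂ))*(1+β) - ((k:ℂ)+1)*(α+β+2) + β + ((k:ℂ)+1) - ((k:ℂ)+(j:ℂ))
      = (((k:ℂ)+(j:ℂ))*(1+β) - (k:ℂ)*(α+β+2)) - (α+(j:ℂ)+1) from by ring,
    show ((k:ℂ)+(j:ℂ))*(1+β) - (k:ℂ)*(α+β+2) + β + (k:ℂ) - ((k:ℂ)+(j:ℂ))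
      = (((k:ℂ)+(j:ℂ))*(1+β) - (k:ℂ)*(α+β+2)) + (β - (j:ℂ)) from by ring]
  rw [show Qp q ((((k:ℂ)+(j:ℂ))*(1+β) - (k:ℂ)*(α+β+2)) + (1+β)) = Qp q (((k:ℂ)+(j:ℂ))*(1+β) - (k:ℂ)*(α+β+2)) * (q * Qp q β) from by
      rw [Qp_add, Qp_add, Qp_one q hq],
    show Qp q ((((k:ℂ)+(j:ℂ))*(1+β) - (k:ℂ)*(α+β+2)) - (α+(j:ℂ)+1))
        = Qp q (((k:ℂ)+(j:ℂ))*(1+β) - (k:ℂ)*(α+β+2)) * ((Qp q α * Qp q (j:ℂ) * q))⁻¹ from by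
      rw [Qp_sub, Qp_add, Qp_add, Qp_one q hq],
    show Qp q ((((k:ℂ)+(j:ℂ))*(1+β) - (k:ℂ)*(α+β+2)) + (β - (j:ℂ)))
        = Qp q (((k:ℂ)+(j:ℂ))*(1+β) - (k:ℂ)*(α+β+2)) * (Qp q β * (Qp q (j:ℂ))⁻¹) from by
      rw [Qp_add, Qp_sub q β (j:ℂ)]]
  rw [show α + ((k:ℂ)+(j:ℂ)+1) - (k:ℂ) = α+(j:ℂ)+1 from by ring,
    show α + ((k:ℂ)+(j:ℂ)) + 1 - (k:ℂ) = α+(j:ℂ)+1 from by ring,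
    show α + ((k:ℂ)+(j:ℂ)) - (k:ℂ) = α+(j:ℂ) from by ring,
    show α + ((k:ℂ)+(j:ℂ)) + 1 - ((k:ℂ)+1) = α+(j:ℂ) from by ring,
    show β + ((k:ℂ)+1) = β+(k:ℂ)+1 from by ring]
  rw [qfall_succ_top' q (α+(j:ℂ)) j, qfall_succ_top' q (β+(k:ℂ)) k,
    qfact_succ q (k+j), qfact_succ q j, qfact_succ q k,
    hn1, ha1, hj1, hk1, hb1, hk0, hab]
  exact stepCore q ((q - q⁻¹)) (Qp q α) (Qp q β) (Qp q (k:ℂ)) (Qp q (j:ℂ)) (Qp q (((k:ℂ)+(j:ℂ))*(1+β) - (k:ℂ)*(α+β+2)))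
    (qfall q (α+(j:ℂ)) j) (qfall q (β+(k:ℂ)) k) (qfact q k) (qfact q j) (qfact q (k+j))
    hq hA hB hK hJ hqq hFk hFj hv3 hv7

lemma Gterm_zero (q α β : ℂ) (n : ℕ) : Gterm q α β n 0 = 0 := by
  simp [Gterm, qint_zero]

lemma Gterm_top (q α β : ℂ) (hq : q ≠ 0) (n : ℕ) :
    Gterm q α β n (n+1) = -(fTerm q α β (n+1) (n+1)) := by
  simp only [fTerm, Gterm, Nat.sub_self, Nat.add_sub_cancel, qfall_zero, qfact_zero]
  rw [show (n:ℂ)*(1+β) - ((n+1:ℕ):ℂ)*(α+β+2) + β + ((n+1:ℕ):ℂ) - (n:ℂ)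
      = ((n+1:ℕ):ℂ)*(1+β) - ((n+1:ℕ):ℂ)*(α+β+2) from by push_cast; ring,
    qfact_succ q n, show ((n+1:ℕ):ℂ) = (n:ℂ)+1 from by push_cast; ring]
  ring

lemma key (q α β : ℂ) (hq : q ≠ 0) (hqq : q - q⁻¹ ≠ 0)
    (hgen : ∀ m : ℕ, 1 ≤ m → qint q (m:ℂ) ≠ 0) (n : ℕ) :
    ∑ k ∈ Finset.range (n+1), fTerm q α β n k = qfall q (α+β+(n:ℂ)+1) n := by
  induction n with
  | zero => simp [fTerm, qfall_zero, qfact_zero, Qp_zero]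
  | succ n ih =>
      rw [Finset.sum_range_succ,
        Finset.sum_congr rfl (fun k hk =>
          step q α β hq hqq hgen n k (by exact Nat.lt_succ_iff.mp (Finset.mem_range.mp hk))),
        Finset.sum_add_distrib, ← Finset.mul_sum, ih, Finset.sum_range_sub (Gterm q α β n),
        Gterm_zero, Gterm_top q α β hq n,
        show α+β+((n+1:ℕ):ℂ)+1 = (α+β+(n:ℂ)+1)+1 from by push_cast; ring,
        qfall_succ_top' q (α+β+(n:ℂ)+1) n,
        show α+β+(n:ℂ)+2 = α+β+(n:ℂ)+1+1 from by ring]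
      ring

theorem cgc_top_orthogonality (q p₁ p₂ : ℂ) (n : ℕ) (hq : q ≠ 0) (hq2 : q ^ 2 ≠ 1)
    (hgen : ∀ k : ℕ, 1 ≤ k → qint q (k : ℂ) ≠ 0)
    (hden : qfall q (2 * (p₁ + p₂ - (n : ℂ)) + (n : ℂ) + 1) n ≠ 0) :
    ∑ z₁ ∈ Finset.range (n + 1),
        Qp q ((n : ℂ) * (1 - (n : ℂ)) - 2 * (z₁ : ℂ) * ((p₁ + p₂ - (n : ℂ)) + 1) +
            2 * (n : ℂ) * p₂) *
          qfact q n * qfall q (2 * p₁ - (z₁ : ℂ)) (n - z₁) *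
          qfall q (2 * p₂ - (n : ℂ) + (z₁ : ℂ)) z₁ /
          (qfall q (2 * (p₁ + p₂ - (n : ℂ)) + (n : ℂ) + 1) n *
            qfact q z₁ * qfact q (n - z₁)) = 1 := by
  have hqq : q - q⁻¹ ≠ 0 := by
    intro h
    apply hq2
    have h2 : q * q⁻¹ = 1 := mul_inv_cancel₀ hq
    linear_combination q * h + h2
  have hterm : ∀ z ∈ Finset.range (n+1),
      Qp q ((n : ℂ) * (1 - (n : ℂ)) - 2 * (z : ℂ) * ((p₁ + p₂ - (n : ℂ)) + 1) +
            2 * (n : ℂ) * p₂) *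
          qfact q n * qfall q (2 * p₁ - (z : ℂ)) (n - z) *
          qfall q (2 * p₂ - (n : ℂ) + (z : ℂ)) z /
          (qfall q (2 * (p₁ + p₂ - (n : ℂ)) + (n : ℂ) + 1) n *
            qfact q z * qfact q (n - z))
        = fTerm q (2*p₁ - (n:ℂ)) (2*p₂ - (n:ℂ)) n z /
            qfall q (2 * (p₁ + p₂ - (n : ℂ)) + (n : ℂ) + 1) n := by
    intro z hz
    simp only [fTerm]
    rw [show 2*p₁ - (n:ℂ) + (n:ℂ) - (z:ℂ) = 2*p₁ - (z:ℂ) from by ring,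
      show 2*p₂ - (n:ℂ) + (z:ℂ) = 2*p₂ - (n:ℂ) + (z:ℂ) from rfl,
      show (n:ℂ)*(1+(2*p₂ - (n:ℂ))) - (z:ℂ)*((2*p₁ - (n:ℂ))+(2*p₂ - (n:ℂ))+2)
        = (n : ℂ) * (1 - (n : ℂ)) - 2 * (z : ℂ) * ((p₁ + p₂ - (n : ℂ)) + 1) +
            2 * (n : ℂ) * p₂ from by ring,
      div_div]
    congr 1
    ring
  rw [Finset.sum_congr rfl hterm, ← Finset.sum_div, key q _ _ hq hqq hgen n,
    show 2*p₁ - (n:ℂ) + (2*p₂ - (n:ℂ)) + (n:ℂ) + 1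
      = 2 * (p₁ + p₂ - (n : ℂ)) + (n : ℂ) + 1 from by ring,
    div_self hden]
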